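/- Consider N+1 particles with x_N ≡ L fixed and potential energy U = (ω₀²/2) x_0² + (ω₁²/2) Σ_{i=1}^{N} (x_i − x_{i−1} − a)² − f(x_0 + x_1 + ... + x_{N−1}), where a constant force f acts on each free particle, ω₀, ω₁ > 0, a > 0, L > 0. Then: (1) the equilibrium configuration exists and is unique, given by x_0 = ω₁²(L + N(N+1)f/(2ω₁²) − Na)/(ω₁² + ω₀²N) and x_k − x_{k−1} = −fk/ω₁² + (ω₀²(L + N(N+1)f/(2ω₁²)) + aω₁²)/(ω₁² + ω₀²N) for k = 1, ..., N−1; (2) this equilibrium satisfies 0 ≤ x_0 < x_1 < ... < x_N = L if and only if −2ω₁²(L − aN)/(N(N+1)) ≤ f < 2ω₁²(ω₀²L + aω₁²)/(N(2ω₁² + ω₀²(N−1))). -/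

import Mathlib

/-- Equilibrium for the chain of `N+1` particles with particle `N` rigidly fixed:
particle `0` is harmonically attached to the origin with frequency `ω0`, nearest
neighbors interact harmonically with frequency `ω1` and natural spacing `a`, and the
constant force `f` acts on each free particle `0, …, N-1`. -/
def IsEquil8 (N : ℕ) (a f ω0 ω1 : ℝ) (x : ℕ → ℝ) : Prop :=
  (-(ω0 ^ 2) * x 0 + ω1 ^ 2 * (x 1 - x 0 - a) + f = 0) ∧
  (∀ k, 0 < k → k < N →
    ω1 ^ 2 * (x (k + 1) - x k - a) - ω1 ^ 2 * (x k - x (k - 1) - a) + f = 0)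

noncomputable def Gfun (x0 s1 a f ω1 : ℝ) (k : ℕ) : ℝ :=
  x0 + k * (s1 + a * ω1 ^ 2) / ω1 ^ 2 - f * k * (k - 1) / (2 * ω1 ^ 2)

lemma equil_formula (N : ℕ) (a f ω0 ω1 : ℝ) (hω1 : ω1 ≠ 0) (x : ℕ → ℝ)
    (hx : IsEquil8 N a f ω0 ω1 x) :
    ∀ k, k ≤ N → x k = Gfun (x 0) (ω1 ^ 2 * (x 1 - x 0 - a)) a f ω1 k := by
  intro k
  induction k using Nat.strong_induction_on with
  | _ k ih =>
    match k with
    | 0 => intro _; simp [Gfun]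
    | 1 => intro _; simp only [Gfun]; push_cast; field_simp; ring
    | (m+2) =>
      intro hk
      have h1 : x m = Gfun (x 0) (ω1 ^ 2 * (x 1 - x 0 - a)) a f ω1 m :=
        ih m (by omega) (by omega)
      have h2 : x (m+1) = Gfun (x 0) (ω1 ^ 2 * (x 1 - x 0 - a)) a f ω1 (m+1) :=
        ih (m+1) (by omega) (by omega)
      have he := hx.2 (m+1) (by omega) (by omega)
      simp only [Nat.add_sub_cancel] at he
      have hx2 : x (m+2) = 2 * x (m+1) - x m - f / ω1 ^ 2 := by
        field_simp at he ⊢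
        linarith
      rw [hx2, h1, h2]
      simp only [Gfun]
      push_cast
      field_simp
      ring

lemma Gfun_equil (N : ℕ) (a f ω0 ω1 : ℝ) (hω1 : ω1 ≠ 0) (x0 s1 : ℝ)
    (h : ω0 ^ 2 * x0 = s1 + f) :
    IsEquil8 N a f ω0 ω1 (Gfun x0 s1 a f ω1) := by
  constructor
  · simp only [Gfun]
    push_cast
    field_simp
    linear_combination (-2 * ω1 ^ 2) * h
  · intro k hk hkN
    have hk1 : ((k - 1 : ℕ) : ℝ) = (k : ℝ) - 1 := by
      have : 1 ≤ k := hk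
      push_cast [Nat.cast_sub this]
      ring
    simp only [Gfun, hk1]
    push_cast
    field_simp
    ring

lemma Gfun_end (N : ℕ) (L a f ω0 ω1 : ℝ) (hω1 : ω1 ≠ 0)
    (hden : (ω1 ^ 2 + ω0 ^ 2 * N : ℝ) ≠ 0) :
    Gfun (ω1 ^ 2 * (L + N * (N + 1) * f / (2 * ω1 ^ 2) - N * a) / (ω1 ^ 2 + ω0 ^ 2 * N))
      (ω0 ^ 2 * (ω1 ^ 2 * (L + N * (N + 1) * f / (2 * ω1 ^ 2) - N * a) / (ω1 ^ 2 + ω0 ^ 2 * N)) - f)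
      a f ω1 N = L := by
  simp only [Gfun]
  field_simp
  ring

lemma solve_x0 (N : ℕ) (L a f ω0 ω1 x0 s1 : ℝ) (hω1 : ω1 ≠ 0)
    (hden : (ω1 ^ 2 + ω0 ^ 2 * N : ℝ) ≠ 0)
    (h1 : Gfun x0 s1 a f ω1 N = L) (h2 : ω0 ^ 2 * x0 = s1 + f) :
    x0 = ω1 ^ 2 * (L + N * (N + 1) * f / (2 * ω1 ^ 2) - N * a) / (ω1 ^ 2 + ω0 ^ 2 * N) := by
  simp only [Gfun] at h1
  field_simp at h1 ⊢
  linear_combination h1 + (2 * (N:ℝ)) * h2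


set_option maxHeartbeats 1600000 in
theorem stmt8 (N : ℕ) (hN : 1 ≤ N) (L a f ω0 ω1 : ℝ)
    (hL : 0 < L) (ha : 0 < a) (hω0 : 0 < ω0) (hω1 : 0 < ω1) :
    -- existence
    (∃ x : ℕ → ℝ, x N = L ∧ IsEquil8 N a f ω0 ω1 x) ∧
    -- uniqueness
    (∀ x y : ℕ → ℝ, x N = L → IsEquil8 N a f ω0 ω1 x →
      y N = L → IsEquil8 N a f ω0 ω1 y → ∀ k ≤ N, x k = y k) ∧
    (∀ x : ℕ → ℝ, x N = L → IsEquil8 N a f ω0 ω1 x →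
      -- explicit form
      (x 0 = ω1 ^ 2 * (L + N * (N + 1) * f / (2 * ω1 ^ 2) - N * a)
              / (ω1 ^ 2 + ω0 ^ 2 * N) ∧
       ∀ k, 1 ≤ k → k ≤ N - 1 →
         x k - x (k - 1) = -(f * k) / ω1 ^ 2 +
           (ω0 ^ 2 * (L + N * (N + 1) * f / (2 * ω1 ^ 2)) + a * ω1 ^ 2)
             / (ω1 ^ 2 + ω0 ^ 2 * N)) ∧
      -- natural ordering criterion
      ((0 ≤ x 0 ∧ ∀ k < N, x k < x (k + 1)) ↔
        (-(2 * ω1 ^ 2 * (L - a * N)) / (N * (N + 1)) ≤ f ∧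
         f < 2 * ω1 ^ 2 * (ω0 ^ 2 * L + a * ω1 ^ 2)
               / (N * (2 * ω1 ^ 2 + ω0 ^ 2 * ((N : ℝ) - 1))))) ) := by
  have hNR : (1:ℝ) ≤ (N:ℝ) := by exact_mod_cast hN
  have hω1' : ω1 ≠ 0 := hω1.ne'
  have hdpos : (0:ℝ) < ω1 ^ 2 + ω0 ^ 2 * N := by positivity
  have hden : (ω1 ^ 2 + ω0 ^ 2 * N : ℝ) ≠ 0 := hdpos.ne'
  set x0v : ℝ := ω1 ^ 2 * (L + N * (N + 1) * f / (2 * ω1 ^ 2) - N * a)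
      / (ω1 ^ 2 + ω0 ^ 2 * N) with hx0v
  set s1v : ℝ := ω0 ^ 2 * x0v - f with hs1v
  have hE : IsEquil8 N a f ω0 ω1 (Gfun x0v s1v a f ω1) :=
    Gfun_equil N a f ω0 ω1 hω1' x0v s1v (by rw [hs1v]; ring)
  have hend : Gfun x0v s1v a f ω1 N = L := Gfun_end N L a f ω0 ω1 hω1' hden
  -- any equilibrium agrees with Gfun x0v s1v
  have key : ∀ x : ℕ → ℝ, x N = L → IsEquil8 N a f ω0 ω1 x →
      ∀ k, k ≤ N → x k = Gfun x0v s1v a f ω1 k := by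
    intro x hxN hx
    have hform := equil_formula N a f ω0 ω1 hω1' x hx
    set s1 : ℝ := ω1 ^ 2 * (x 1 - x 0 - a) with hs1
    have h2 : ω0 ^ 2 * x 0 = s1 + f := by have := hx.1; linarith
    have h1 : Gfun (x 0) s1 a f ω1 N = L := by rw [← hform N le_rfl]; exact hxN
    have hx0 : x 0 = x0v := solve_x0 N L a f ω0 ω1 (x 0) s1 hω1' hden h1 h2
    have hs1e : s1 = s1v := by rw [hs1v, ← hx0]; linarith
    intro k hk
    rw [hform k hk, hx0, hs1e]
  refine ⟨⟨Gfun x0v s1v a f ω1, hend, hE⟩, ?_, ?_⟩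
  · intro x y hxN hx hyN hy k hk
    rw [key x hxN hx k hk, key y hyN hy k hk]
  intro x hxN hx
  have hx0 : x 0 = x0v := by
    have := key x hxN hx 0 (Nat.zero_le _)
    simpa [Gfun] using this
  have gapval : ∀ k : ℕ, Gfun x0v s1v a f ω1 (k+1) - Gfun x0v s1v a f ω1 k
      = (s1v + a * ω1 ^ 2 - f * k) / ω1 ^ 2 := by
    intro k
    simp only [Gfun]
    push_cast
    field_simp
    ring
  refine ⟨⟨hx0, ?_⟩, ?_⟩
  · -- gap formula
    intro k hk1 hkN1
    have hkN : k ≤ N := by omega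
    have hk1N : k - 1 ≤ N := by omega
    rw [key x hxN hx k hkN, key x hxN hx (k-1) hk1N]
    have hcast : ((k - 1 : ℕ) : ℝ) = (k : ℝ) - 1 := by
      push_cast [Nat.cast_sub hk1]; ring
    simp only [Gfun, hcast, hs1v, hx0v]
    field_simp
    ring
  · -- ordering criterion
    have hgap_iff : ∀ k : ℕ, (Gfun x0v s1v a f ω1 k < Gfun x0v s1v a f ω1 (k+1)
        ↔ 0 < s1v + a * ω1 ^ 2 - f * k) := by
      intro k
      rw [← sub_pos, gapval k]
      constructor
      · intro h
        by_contra hc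
        push_neg at hc
        have : (s1v + a * ω1 ^ 2 - f * k) / ω1 ^ 2 ≤ 0 := by
          apply div_nonpos_of_nonpos_of_nonneg hc (by positivity)
        linarith
      · intro h; exact div_pos h (by positivity)
    -- key algebraic identity for the last gap
    have hQ : (s1v + a * ω1 ^ 2 - f * ((N:ℝ) - 1)) * (ω1 ^ 2 + ω0 ^ 2 * N)
        = ω1 ^ 2 * (ω0 ^ 2 * L + a * ω1 ^ 2)
          - f * N * (2 * ω1 ^ 2 + ω0 ^ 2 * ((N:ℝ) - 1)) / 2 := by
      rw [hs1v, hx0v]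
      field_simp
      ring
    have hx0den : x0v * (2 * (ω1 ^ 2 + ω0 ^ 2 * N))
        = 2 * ω1 ^ 2 * L + N * (N + 1) * f - 2 * ω1 ^ 2 * (N * a) := by
      rw [hx0v]
      field_simp
    have hNN1 : (0:ℝ) < (N:ℝ) * ((N:ℝ) + 1) := by nlinarith
    have hD2 : (0:ℝ) < (N:ℝ) * (2 * ω1 ^ 2 + ω0 ^ 2 * ((N:ℝ) - 1)) := by nlinarith [sq_nonneg ω0, sq_nonneg ω1, pow_pos hω1 2]
    constructor
    · rintro ⟨h0, hg⟩
      rw [hx0] at h0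
      constructor
      · rw [div_le_iff₀ hNN1]
        have h1 : 0 ≤ x0v * (2 * (ω1 ^ 2 + ω0 ^ 2 * N)) :=
          mul_nonneg h0 (by positivity)
        rw [hx0den] at h1
        linarith
      · rw [lt_div_iff₀ hD2]
        have hlt := hg (N-1) (by omega)
        rw [key x hxN hx (N-1) (by omega), key x hxN hx (N-1+1) (by omega)] at hlt
        have hpos := (hgap_iff (N-1)).mp hlt
        have hcast : ((N - 1 : ℕ) : ℝ) = (N : ℝ) - 1 := by
          push_cast [Nat.cast_sub hN]; ring
        rw [hcast] at hpos
        have hp : 0 < (s1v + a * ω1 ^ 2 - f * ((N:ℝ) - 1)) * (ω1 ^ 2 + ω0 ^ 2 * N) :=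
          mul_pos hpos hdpos
        rw [hQ] at hp
        linarith
    · rintro ⟨hf1, hf2⟩
      rw [div_le_iff₀ hNN1] at hf1
      rw [lt_div_iff₀ hD2] at hf2
      have hnum : 0 * (2 * (ω1 ^ 2 + ω0 ^ 2 * N)) ≤ x0v * (2 * (ω1 ^ 2 + ω0 ^ 2 * N)) := by
        rw [hx0den, zero_mul]; linarith
      have h0 : 0 ≤ x0v := le_of_mul_le_mul_right hnum (by positivity)
      have hlast : 0 < s1v + a * ω1 ^ 2 - f * ((N:ℝ) - 1) := by
        by_contra hc
        push_neg at hc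
        have hp := mul_nonpos_of_nonpos_of_nonneg hc (le_of_lt hdpos)
        rw [hQ] at hp
        linarith
      have hsf : 0 ≤ s1v + f := by
        have := mul_nonneg (sq_nonneg ω0) h0
        rw [hs1v]
        linarith
      refine ⟨hx0 ▸ h0, ?_⟩
      intro k hkN
      rw [key x hxN hx k (by omega), key x hxN hx (k+1) (by omega), hgap_iff k]
      have hkle : (k:ℝ) ≤ (N:ℝ) - 1 := by
        have : (k:ℝ) + 1 ≤ (N:ℝ) := by exact_mod_cast Nat.succ_le_of_lt hkN
        linarith
      have hk0 : (0:ℝ) ≤ (k:ℝ) := Nat.cast_nonneg k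
      have haw : (0:ℝ) < a * ω1 ^ 2 := by positivity
      rcases le_or_gt 0 f with hf | hf
      · have := mul_nonneg hf (by linarith : (0:ℝ) ≤ (N:ℝ) - 1 - k)
        linarith [hlast]
      · have := mul_nonneg (by linarith : (0:ℝ) ≤ -f) hk0
        linarith [hsf]
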